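/- arXiv:0907.0158 — 2 statements merged into one kernel-verified Lean document; each statement's English description precedes it below -/
import Mathlib

section
/- Let q and r be positive integers with d = gcd(q, r), and let d' be the largest divisor of d coprime to both q/d and r/d. Then in the group ring ℤ[ℚ/ℤ], F_q · F_r = φ(d) · ∑_{e | d'} c(d', e) · F_{qr/(d·e)}, where c(d', e) = ∏_{p | d', p ∤ e} (1 − 1/(p−1)), the product over primes p dividing d' but not e. -/
open Finset AddMonoidAlgebra

noncomputable def F (n : ℕ) : AddMonoidAlgebra ℚ (AddCircle (1 : ℚ)) :=
  ∑ a ∈ (Finset.range n).filter (fun a => Nat.Coprime a n),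
    AddMonoidAlgebra.single (((a : ℚ) / n : ℚ) : AddCircle (1 : ℚ)) 1

/-- `c d' e = ∏_{p | d', p ∤ e} (1 - 1/(p-1))`, product over primes. -/
noncomputable def c (d' e : ℕ) : ℚ :=
  ∏ p ∈ d'.primeFactors.filter (fun p => ¬ p ∣ e), (1 - 1 / ((p : ℚ) - 1))

local instance fact1 : Fact ((0:ℚ) < 1) := ⟨one_pos⟩

namespace FStuff

noncomputable def ψ (n a : ℕ) : AddCircle (1 : ℚ) := (((a : ℚ) / n : ℚ) : AddCircle (1 : ℚ))

lemma psi_injOn {n : ℕ} {a b : ℕ} (ha : a < n) (hb : b < n) (h : ψ n a = ψ n b) : a = b := by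
  have hn : (0:ℚ) < n := by exact_mod_cast Nat.pos_of_ne_zero (by omega)
  have hmem : ∀ x : ℕ, x < n → ((x : ℚ)/n) ∈ Set.Ico (0:ℚ) (0 + 1) := by
    intro x hx
    constructor
    · positivity
    · rw [zero_add, div_lt_one hn]; exact_mod_cast hx
  have := (AddCircle.coe_eq_coe_iff_of_mem_Ico (hmem a ha) (hmem b hb)).1 h
  have : (a:ℚ) = b := by
    field_simp at this; exact_mod_cast this
  exact_mod_cast this

lemma addOrderOf_psi {n a : ℕ} (hn : 0 < n) (h : Nat.Coprime a n) :
    addOrderOf (ψ n a) = n := by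
  have := AddCircle.addOrderOf_div_of_gcd_eq_one (p := (1:ℚ)) hn h
  rwa [mul_one] at this

/-- the set of points of order exactly `n`. -/
noncomputable def T (n : ℕ) : Finset (AddCircle (1 : ℚ)) :=
  ((Finset.range n).filter (fun a => Nat.Coprime a n)).image (ψ n)

/-- the set of points of order dividing `n` (the `n`-torsion). -/
noncomputable def U (n : ℕ) : Finset (AddCircle (1 : ℚ)) :=
  (Finset.range n).image (ψ n)

lemma mem_T {n : ℕ} (hn : 0 < n) {x : AddCircle (1:ℚ)} :
    x ∈ T n ↔ addOrderOf x = n := by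
  constructor
  · intro hx
    obtain ⟨a, ha, rfl⟩ := Finset.mem_image.1 hx
    simp only [Finset.mem_filter, Finset.mem_range] at ha
    exact addOrderOf_psi hn ha.2
  · intro hx
    obtain ⟨m, hm, hg, he⟩ := (AddCircle.addOrderOf_eq_pos_iff hn).1 hx
    refine Finset.mem_image.2 ⟨m, ?_, ?_⟩
    · simp only [Finset.mem_filter, Finset.mem_range]
      exact ⟨hm, hg⟩
    · rw [ψ]; rw [← he, mul_one]

lemma card_T {n : ℕ} : (T n).card = n.totient := by
  rcases Nat.eq_zero_or_pos n with rfl | hn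
  · simp [T]
  rw [T, Finset.card_image_of_injOn, Nat.totient]
  · congr 1
    apply Finset.filter_congr
    intro a _
    simp [Nat.coprime_comm, Nat.Coprime]
  · intro a ha b hb h
    simp only [Finset.coe_filter, Set.mem_setOf_eq, Finset.mem_range] at ha hb
    exact psi_injOn ha.1 hb.1 h

lemma F_eq_sum_T (n : ℕ) : F n = ∑ x ∈ T n, AddMonoidAlgebra.single x 1 := by
  rw [T, Finset.sum_image]
  · rfl
  · intro a ha b hb h
    simp only [Finset.mem_coe, Finset.mem_filter, Finset.mem_range] at ha hb
    exact psi_injOn ha.1 hb.1 h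

lemma mem_U {n : ℕ} (hn : 0 < n) {x : AddCircle (1:ℚ)} :
    x ∈ U n ↔ n • x = 0 := by
  constructor
  · intro hx
    obtain ⟨a, ha, rfl⟩ := Finset.mem_image.1 hx
    rw [ψ, ← AddCircle.coe_nsmul, AddCircle.coe_eq_zero_iff]
    refine ⟨a, ?_⟩
    have hn' : (n:ℚ) ≠ 0 := by exact_mod_cast hn.ne'
    push_cast
    rw [zsmul_eq_mul, nsmul_eq_mul]
    field_simp
    norm_cast
  · intro hx
    have hord : addOrderOf x ∣ n := addOrderOf_dvd_of_nsmul_eq_zero hx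
    have hpos : 0 < addOrderOf x := by
      rcases Nat.eq_zero_or_pos (addOrderOf x) with h0 | h
      · rw [h0] at hord
        omega
      · exact h
    set m := addOrderOf x with hm
    obtain ⟨k, hk, hg, he⟩ := (AddCircle.addOrderOf_eq_pos_iff hpos).1 hm.symm
    obtain ⟨t, ht⟩ := hord
    refine Finset.mem_image.2 ⟨k * t, ?_, ?_⟩
    · rw [Finset.mem_range, ht]
      have htpos : 0 < t := by
        rcases Nat.eq_zero_or_pos t with rfl | h
        · omega
        · exact h
      exact Nat.mul_lt_mul_of_lt_of_le hk le_rfl htpos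
    · rw [ψ, ← he, mul_one]
      congr 1
      have hm0 : (m:ℚ) ≠ 0 := by exact_mod_cast hpos.ne'
      have ht0 : (t:ℚ) ≠ 0 := by
        have : 0 < t := by
          rcases Nat.eq_zero_or_pos t with rfl | h
          · omega
          · exact h
        exact_mod_cast this.ne'
      rw [ht]
      push_cast
      field_simp

lemma card_U {n : ℕ} (hn : 0 < n) : (U n).card = n := by
  rw [U, Finset.card_image_of_injOn, Finset.card_range]
  intro a ha b hb h
  simp only [Finset.coe_range, Set.mem_Iio] at ha hb
  exact psi_injOn ha hb h

noncomputable def H (n : ℕ) : AddMonoidAlgebra ℚ (AddCircle (1 : ℚ)) :=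
  ∑ x ∈ U n, AddMonoidAlgebra.single x 1

lemma T_subset_U {m n : ℕ} (hn : 0 < n) (hm : 0 < m) (h : m ∣ n) : T m ⊆ U n := by
  intro x hx
  rw [mem_T hm] at hx
  rw [mem_U hn]
  have : addOrderOf x ∣ n := hx ▸ h
  exact addOrderOf_dvd_iff_nsmul_eq_zero.1 this

lemma U_eq_biUnion {n : ℕ} (hn : 0 < n) :
    U n = n.divisors.biUnion T := by
  ext x
  simp only [Finset.mem_biUnion, Nat.mem_divisors]
  constructor
  · intro hx
    have h0 : n • x = 0 := (mem_U hn).1 hx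
    have hord : addOrderOf x ∣ n := addOrderOf_dvd_of_nsmul_eq_zero h0
    have hpos : 0 < addOrderOf x := Nat.pos_of_dvd_of_pos hord hn
    exact ⟨addOrderOf x, ⟨hord, hn.ne'⟩, (mem_T hpos).2 rfl⟩
  · rintro ⟨m, ⟨hmn, -⟩, hx⟩
    have hm : 0 < m := Nat.pos_of_dvd_of_pos hmn hn
    exact T_subset_U hn hm hmn hx

lemma H_eq_sum_F {n : ℕ} (hn : 0 < n) : H n = ∑ m ∈ n.divisors, F m := by
  rw [H, U_eq_biUnion hn, Finset.sum_biUnion]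
  · exact Finset.sum_congr rfl fun m hm => (F_eq_sum_T m).symm
  · intro a ha b hb hab
    simp only [Finset.mem_coe, Nat.mem_divisors] at ha hb
    have ha' : 0 < a := Nat.pos_of_dvd_of_pos ha.1 hn
    have hb' : 0 < b := Nat.pos_of_dvd_of_pos hb.1 hn
    apply Finset.disjoint_left.2
    intro x hxa hxb
    rw [mem_T ha'] at hxa
    rw [mem_T hb'] at hxb
    exact hab (by rw [← hxa, ← hxb])

end FStuff

namespace FStuff

lemma sum_single_mul_sum_single (S S' : Finset (AddCircle (1:ℚ))) :
    (∑ x ∈ S, AddMonoidAlgebra.single x (1:ℚ)) * (∑ y ∈ S', AddMonoidAlgebra.single y (1:ℚ))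
      = ∑ x ∈ S, ∑ y ∈ S', AddMonoidAlgebra.single (x + y) (1:ℚ) := by
  rw [Finset.sum_mul_sum]
  refine Finset.sum_congr rfl fun x _ => Finset.sum_congr rfl fun y _ => ?_
  rw [AddMonoidAlgebra.single_mul_single, mul_one]

lemma order_add_ppow {p n : ℕ} (hp : p.Prime) (hn : 0 < n) {x y : AddCircle (1:ℚ)}
    (hx : addOrderOf x = p ^ n) (hy : p ^ (n-1) • y = 0) :
    addOrderOf (x + y) = p ^ n := by
  have hyn : p ^ n • y = 0 := by
    obtain ⟨k, hk⟩ : p ^ (n-1) ∣ p ^ n := pow_dvd_pow p (by omega)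
    rw [hk, mul_nsmul, hy, smul_zero]
  have hdvd : addOrderOf (x + y) ∣ p ^ n := by
    apply addOrderOf_dvd_of_nsmul_eq_zero
    rw [nsmul_add, hyn, add_zero, ← hx, addOrderOf_nsmul_eq_zero]
  obtain ⟨k, hk, hord⟩ := (Nat.dvd_prime_pow hp).1 hdvd
  rcases Nat.lt_or_ge k n with hlt | hge
  · exfalso
    have h1 : addOrderOf (x + y) ∣ p ^ (n-1) := hord ▸ pow_dvd_pow p (by omega)
    have h2 : p ^ (n-1) • (x + y) = 0 := addOrderOf_dvd_iff_nsmul_eq_zero.1 h1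
    have h3 : p ^ (n-1) • x = 0 := by
      have := h2
      rw [nsmul_add, hy, add_zero] at this
      exact this
    have h4 : p ^ n ∣ p ^ (n-1) := hx ▸ addOrderOf_dvd_of_nsmul_eq_zero h3
    have := Nat.le_of_dvd (pow_pos hp.pos _) h4
    have := Nat.pow_lt_pow_right hp.one_lt (show n - 1 < n by omega)
    omega
  · have : k = n := le_antisymm hk hge
    rw [hord, this]

lemma translate_U {b : ℕ} (hb : 0 < b) {x : AddCircle (1:ℚ)} (hx : b • x = 0) :
    ∑ y ∈ U b, AddMonoidAlgebra.single (x + y) (1:ℚ) = H b := by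
  rw [H]
  apply Finset.sum_bij' (i := fun y _ => x + y) (j := fun z _ => z - x)
  · intro y hy
    rw [mem_U hb] at hy ⊢
    rw [nsmul_add, hx, hy, add_zero]
  · intro z hz
    rw [mem_U hb] at hz ⊢
    rw [sub_eq_add_neg, nsmul_add, hz, neg_nsmul, hx, neg_zero, add_zero]
  · intro y _; abel
  · intro z _; abel
  · intro y _; rfl

lemma translate_T_ppow {p n : ℕ} (hp : p.Prime) (hn : 0 < n) {y : AddCircle (1:ℚ)}
    (hy : p ^ (n-1) • y = 0) :
    ∑ x ∈ T (p ^ n), AddMonoidAlgebra.single (x + y) (1:ℚ) = F (p ^ n) := by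
  have hpn : 0 < p ^ n := pow_pos hp.pos _
  rw [F_eq_sum_T]
  apply Finset.sum_bij' (i := fun z _ => z + y) (j := fun z _ => z - y)
  · intro z hz
    rw [mem_T hpn] at hz ⊢
    exact order_add_ppow hp hn hz hy
  · intro z hz
    rw [mem_T hpn] at hz ⊢
    rw [sub_eq_add_neg]
    apply order_add_ppow hp hn hz
    rw [neg_nsmul, hy, neg_zero]
  · intro z _; abel
  · intro z _; abel
  · intro z _; rfl

lemma F_mul_H {a b : ℕ} (ha : 0 < a) (hb : 0 < b) (hab : a ∣ b) :
    F a * H b = (a.totient : ℚ) • H b := by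
  rw [F_eq_sum_T, H, sum_single_mul_sum_single]
  have : ∀ x ∈ T a, ∑ y ∈ U b, AddMonoidAlgebra.single (x + y) (1:ℚ) = H b := by
    intro x hx
    rw [mem_T ha] at hx
    apply translate_U hb
    apply addOrderOf_dvd_iff_nsmul_eq_zero.1
    rw [hx]; exact hab
  rw [Finset.sum_congr rfl this, Finset.sum_const, card_T, H]
  rw [← Nat.cast_smul_eq_nsmul ℚ]

lemma F_ppow_mul_H_pred {p n : ℕ} (hp : p.Prime) (hn : 0 < n) :
    F (p ^ n) * H (p ^ (n-1)) = ((p ^ (n-1) : ℕ) : ℚ) • F (p ^ n) := by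
  have hbn : 0 < p ^ (n-1) := pow_pos hp.pos _
  rw [F_eq_sum_T, H, sum_single_mul_sum_single, Finset.sum_comm]
  have : ∀ y ∈ U (p ^ (n-1)),
      ∑ x ∈ T (p ^ n), AddMonoidAlgebra.single (x + y) (1:ℚ) = F (p ^ n) := by
    intro y hy
    rw [mem_U hbn] at hy
    exact translate_T_ppow hp hn hy
  rw [Finset.sum_congr rfl this, Finset.sum_const, card_U hbn,
    ← Nat.cast_smul_eq_nsmul ℚ, F_eq_sum_T]

lemma F_mul_F_ppow_lt {p α β : ℕ} (hp : p.Prime) (h : α < β) :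
    F (p ^ α) * F (p ^ β) = (((p ^ α).totient : ℕ) : ℚ) • F (p ^ β) := by
  have hpα : 0 < p ^ α := pow_pos hp.pos _
  rw [F_eq_sum_T (p ^ α), F_eq_sum_T (p ^ β), sum_single_mul_sum_single]
  have : ∀ x ∈ T (p ^ α), ∑ y ∈ T (p ^ β), AddMonoidAlgebra.single (x + y) (1:ℚ) = F (p ^ β) := by
    intro x hx
    rw [mem_T hpα] at hx
    have hx' : p ^ (β - 1) • x = 0 := by
      apply addOrderOf_dvd_iff_nsmul_eq_zero.1
      rw [hx]
      exact pow_dvd_pow p (by omega)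
    rw [← translate_T_ppow hp (show 0 < β by omega) hx']
    refine Finset.sum_congr rfl fun y _ => ?_
    rw [add_comm]
  rw [Finset.sum_congr rfl this, Finset.sum_const, card_T,
    ← Nat.cast_smul_eq_nsmul ℚ, F_eq_sum_T]

lemma F_eq_H_sub_H {p α : ℕ} (hp : p.Prime) (hα : 0 < α) :
    F (p ^ α) = H (p ^ α) - H (p ^ (α - 1)) := by
  have h1 : 0 < p ^ α := pow_pos hp.pos _
  have h2 : 0 < p ^ (α - 1) := pow_pos hp.pos _
  rw [H_eq_sum_F h1, H_eq_sum_F h2, Nat.sum_divisors_prime_pow hp, Nat.sum_divisors_prime_pow hp]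
  have : α - 1 + 1 = α := by omega
  rw [this, Finset.sum_range_succ]
  abel

lemma F_ppow_sq {p α : ℕ} (hp : p.Prime) (hα : 0 < α) :
    F (p ^ α) * F (p ^ α)
      = (((p ^ α).totient : ℕ) : ℚ) • H (p ^ α) - ((p ^ (α - 1) : ℕ) : ℚ) • F (p ^ α) := by
  conv_lhs => rw [show F (p^α) * F (p^α) = F (p^α) * (H (p^α) - H (p^(α-1))) by
    rw [← F_eq_H_sub_H hp hα]]
  rw [mul_sub, F_mul_H (pow_pos hp.pos _) (pow_pos hp.pos _) dvd_rfl,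
    F_ppow_mul_H_pred hp hα]

lemma F_one : F 1 = 1 := by
  rw [F]
  simp only [Finset.range_one, Finset.filter_singleton]
  norm_num [Nat.coprime_one_right]
  exact AddMonoidAlgebra.one_def.symm

lemma F_mul_F_coprime {m n : ℕ} (hm : 0 < m) (hn : 0 < n) (h : m.Coprime n) :
    F m * F n = F (m * n) := by
  have hmn : 0 < m * n := Nat.mul_pos hm hn
  rw [F_eq_sum_T m, F_eq_sum_T n, sum_single_mul_sum_single, F_eq_sum_T (m*n),
    ← Finset.sum_product']
  have key : ∀ z : AddCircle (1:ℚ), m • z = 0 → n • z = 0 → z = 0 := by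
    intro z hmz hnz
    have hg := Nat.gcd_eq_gcd_ab m n
    rw [h] at hg
    have : (1:ℤ) • z = ((m : ℤ) * Nat.gcdA m n) • z + ((n:ℤ) * Nat.gcdB m n) • z := by
      rw [← add_smul, ← hg]
      norm_num
    rw [one_smul] at this
    rw [this, mul_comm (m:ℤ), mul_comm (n:ℤ), mul_smul, mul_smul,
      natCast_zsmul, natCast_zsmul, hmz, hnz, smul_zero, smul_zero, add_zero]
  have horder : ∀ x y : AddCircle (1:ℚ), addOrderOf x = m → addOrderOf y = n →
      addOrderOf (x + y) = m * n := by
    intro x y hx hy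
    have := (AddCommute.all x y).addOrderOf_add_eq_mul_addOrderOf_of_coprime
      (by rw [hx, hy]; exact h)
    rw [hx, hy] at this
    exact this
  have hmaps : ∀ a ∈ T m ×ˢ T n, a.1 + a.2 ∈ T (m * n) := by
    rintro ⟨x, y⟩ ha
    rw [Finset.mem_product] at ha
    rw [mem_T hmn]
    exact horder x y ((mem_T hm).1 ha.1) ((mem_T hn).1 ha.2)
  have hinj : ∀ a ∈ T m ×ˢ T n, ∀ b ∈ T m ×ˢ T n,
      a.1 + a.2 = b.1 + b.2 → a = b := by
    rintro ⟨x, y⟩ ha ⟨x', y'⟩ hb hab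
    rw [Finset.mem_product] at ha hb
    have hxo := (mem_T hm).1 ha.1
    have hyo := (mem_T hn).1 ha.2
    have hxo' := (mem_T hm).1 hb.1
    have hyo' := (mem_T hn).1 hb.2
    simp only at hab
    have hdiff : x - x' = y' - y := by
      rw [sub_eq_sub_iff_add_eq_add, hab]
      exact add_comm _ _
    have e1 : ∀ z : AddCircle (1:ℚ), ∀ k : ℕ, addOrderOf z = k → k • z = 0 := by
      intro z k hk
      rw [← hk]
      exact addOrderOf_nsmul_eq_zero z
    have hm1 : m • (x - x') = 0 := by
      rw [smul_sub, e1 x m hxo, e1 x' m hxo', sub_zero]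
    have hn1 : n • (x - x') = 0 := by
      rw [hdiff, smul_sub, e1 y' n hyo', e1 y n hyo, sub_zero]
    have hxx : x = x' := by
      have := key _ hm1 hn1
      rwa [sub_eq_zero] at this
    have hyy : y = y' := by
      apply add_left_cancel (a := x)
      rw [hab, hxx]
    rw [Prod.ext_iff]
    exact ⟨hxx, hyy⟩
  have hcard : (T (m*n)).card ≤ (T m ×ˢ T n).card := by
    rw [Finset.card_product, card_T, card_T, card_T, Nat.totient_mul h]
  have hsurj : ∀ z ∈ T (m * n), ∃ a ∈ T m ×ˢ T n, z = a.1 + a.2 := by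
    intro z hz
    obtain ⟨a, ha, haz⟩ := Finset.surj_on_of_inj_on_of_card_le (fun a _ => a.1 + a.2)
      hmaps (fun a b ha hb hab => hinj a ha b hb hab) hcard z hz
    exact ⟨a, ha, haz⟩
  refine Finset.sum_bij (fun a _ => a.1 + a.2) hmaps ?_ ?_ ?_
  · intro a ha b hb hab
    exact hinj a ha b hb hab
  · intro z hz
    obtain ⟨a, ha, haz⟩ := hsurj z hz
    exact ⟨a, ha, haz.symm⟩
  · intro a _
    rfl

end FStuff

namespace FStuff


lemma sum_divisors_coprime_mul {m n : ℕ} (h : Nat.Coprime m n) (hm : m ≠ 0) (hn : n ≠ 0)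
    {M : Type*} [AddCommMonoid M] (f : ℕ → M) :
    ∑ e ∈ (m*n).divisors, f e = ∑ a ∈ m.divisors, ∑ b ∈ n.divisors, f (a*b) := by
  rw [← Finset.sum_product']
  symm
  refine Finset.sum_bij (fun a _ => a.1 * a.2) ?_ ?_ ?_ (fun a _ => rfl)
  · rintro ⟨a, b⟩ hab
    rw [Finset.mem_product, Nat.mem_divisors, Nat.mem_divisors] at hab
    rw [Nat.mem_divisors]
    exact ⟨mul_dvd_mul hab.1.1 hab.2.1, mul_ne_zero hm hn⟩
  · rintro ⟨a, b⟩ hab ⟨a', b'⟩ hab' heq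
    rw [Finset.mem_product, Nat.mem_divisors, Nat.mem_divisors] at hab hab'
    simp only at heq
    have ha : a ∣ m := hab.1.1
    have hb : b ∣ n := hab.2.1
    have ha' : a' ∣ m := hab'.1.1
    have hb' : b' ∣ n := hab'.2.1
    have hco : Nat.Coprime a b' :=
      Nat.Coprime.coprime_dvd_left ha (Nat.Coprime.coprime_dvd_right hb' h)
    have hco' : Nat.Coprime a' b :=
      Nat.Coprime.coprime_dvd_left ha' (Nat.Coprime.coprime_dvd_right hb h)
    have h1 : a ∣ a' := by
      have : a ∣ a' * b' := heq ▸ Dvd.intro b rfl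
      exact hco.dvd_of_dvd_mul_right this
    have h2 : a' ∣ a := by
      have : a' ∣ a * b := heq ▸ Dvd.intro b' rfl
      exact hco'.dvd_of_dvd_mul_right this
    have haa : a = a' := Nat.dvd_antisymm h1 h2
    have ha0 : 0 < a := Nat.pos_of_dvd_of_pos ha (Nat.pos_of_ne_zero hm)
    have hbb : b = b' := by
      apply Nat.eq_of_mul_eq_mul_left ha0
      rw [heq, haa]
    exact Prod.ext haa hbb
  · intro e he
    rw [Nat.mem_divisors] at he
    refine ⟨(Nat.gcd e m, Nat.gcd e n), ?_, ?_⟩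
    · rw [Finset.mem_product, Nat.mem_divisors, Nat.mem_divisors]
      exact ⟨⟨Nat.gcd_dvd_right e m, hm⟩, ⟨Nat.gcd_dvd_right e n, hn⟩⟩
    · exact (Nat.gcd_mul_gcd_eq_iff_dvd_mul_of_coprime h).2 he.1


lemma c_ppow_mul {p α d₀ e₀ j : ℕ} (hp : p.Prime) (hα : α ≠ 0) (hpd : ¬ p ∣ d₀)
    (hd₀ : d₀ ≠ 0) (hpe : ¬ p ∣ e₀) :
    c (p^α * d₀) (p^j * e₀) = (if j = 0 then (1 - 1/((p:ℚ)-1)) else 1) * c d₀ e₀ := by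
  rw [c, c, Nat.primeFactors_mul (pow_ne_zero α hp.pos.ne') hd₀,
    Nat.primeFactors_pow p hα, hp.primeFactors]
  rw [Finset.filter_union, Finset.prod_union]
  · congr 1
    · rw [Finset.filter_singleton]
      by_cases hj : j = 0
      · subst hj
        rw [if_pos (by simpa using hpe), Finset.prod_singleton, if_pos rfl]
      · rw [if_neg (fun hcon => hcon ((dvd_pow_self p hj).mul_right e₀)),
          Finset.prod_empty, if_neg hj]
    · apply Finset.prod_congr _ (fun _ _ => rfl)
      apply Finset.filter_congr
      intro ℓ hℓ
      have hℓp : ℓ.Prime := Nat.prime_of_mem_primeFactors hℓ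
      have hℓne : ℓ ≠ p := by
        rintro rfl
        exact hpd (Nat.dvd_of_mem_primeFactors hℓ)
      have hco : Nat.Coprime ℓ (p^j) := Nat.Coprime.pow_right _
        ((Nat.coprime_primes hℓp hp).2 hℓne)
      constructor
      · intro hnot hcon
        exact hnot (hcon.mul_left (p^j))
      · intro hnot hcon
        rw [mul_comm] at hcon
        exact hnot (hco.dvd_of_dvd_mul_right hcon)
  · exact Finset.disjoint_filter_filter (Finset.disjoint_singleton_left.2
      (fun hcon => hpd (Nat.dvd_of_mem_primeFactors hcon)))

lemma gcd_ordCompl {p q r : ℕ} (hp : p.Prime) (hq : q ≠ 0) (hr : r ≠ 0)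
    (hle : q.factorization p ≤ r.factorization p) :
    Nat.gcd q r = p ^ (q.factorization p) * Nat.gcd (ordCompl[p] q) (ordCompl[p] r) := by
  set α := q.factorization p with hα
  set β := r.factorization p with hβ
  set q₀ := ordCompl[p] q with hq₀
  set r₀ := ordCompl[p] r with hr₀
  have hq0 : q = p ^ α * q₀ := (Nat.ordProj_mul_ordCompl_eq_self q p).symm
  have hr0 : r = p ^ β * r₀ := (Nat.ordProj_mul_ordCompl_eq_self r p).symm
  conv_lhs => rw [hq0, hr0]
  rw [show p ^ β = p ^ α * p ^ (β - α) by rw [← pow_add]; congr 1; omega]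
  rw [mul_assoc, Nat.gcd_mul_left]
  congr 1
  have hco : Nat.Coprime (p ^ (β - α)) q₀ :=
    Nat.Coprime.pow_left _ ((Nat.Prime.coprime_iff_not_dvd hp).2 (Nat.not_dvd_ordCompl hp hq))
  exact hco.gcd_mul_left_cancel_right _


end FStuff
namespace FStuff

lemma smul_mul_smul' {a b : ℚ} {X Y : AddMonoidAlgebra ℚ (AddCircle (1:ℚ))} :
    (a • X) * (b • Y) = (a * b) • (X * Y) := by
  rw [smul_mul_assoc, mul_smul_comm, smul_smul]

set_option maxHeartbeats 2000000 in
lemma keyStep (N : ℕ)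
    (IH : ∀ q r d d' : ℕ, q * r ≤ N → 0 < q → 0 < r → d = Nat.gcd q r → d' ∣ d →
      Nat.Coprime d' (q / d) → Nat.Coprime d' (r / d) →
      (∀ e : ℕ, e ∣ d → Nat.Coprime e (q / d) → Nat.Coprime e (r / d) → e ∣ d') →
      F q * F r = (Nat.totient d : ℚ) • ∑ e ∈ d'.divisors, c d' e • F (q * r / (d * e)))
    (q r d d' : ℕ) (hN : q * r ≤ N + 1) (hq : 0 < q) (hr : 0 < r)
    (hd : d = Nat.gcd q r) (hd'1 : d' ∣ d) (hd'2 : Nat.Coprime d' (q / d))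
    (hd'3 : Nat.Coprime d' (r / d))
    (hd'max : ∀ e : ℕ, e ∣ d → Nat.Coprime e (q / d) → Nat.Coprime e (r / d) → e ∣ d')
    (p : ℕ) (hp : p.Prime) (hpqr : p ∣ q * r)
    (hαβ : q.factorization p ≤ r.factorization p) :
    F q * F r = (Nat.totient d : ℚ) • ∑ e ∈ d'.divisors, c d' e • F (q * r / (d * e)) := by
  set α := q.factorization p with hα
  set β := r.factorization p with hβ
  set q₀ := ordCompl[p] q with hq₀def
  set r₀ := ordCompl[p] r with hr₀def
  set d₀ := Nat.gcd q₀ r₀ with hd₀def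
  have hq0 : q = p ^ α * q₀ := (Nat.ordProj_mul_ordCompl_eq_self q p).symm
  have hr0 : r = p ^ β * r₀ := (Nat.ordProj_mul_ordCompl_eq_self r p).symm
  have hq₀pos : 0 < q₀ := Nat.ordCompl_pos p hq.ne'
  have hr₀pos : 0 < r₀ := Nat.ordCompl_pos p hr.ne'
  have hpq₀ : ¬ p ∣ q₀ := Nat.not_dvd_ordCompl hp hq.ne'
  have hpr₀ : ¬ p ∣ r₀ := Nat.not_dvd_ordCompl hp hr.ne'
  have hdeq : d = p ^ α * d₀ := by rw [hd]; exact gcd_ordCompl hp hq.ne' hr.ne' hαβ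
  have hd₀q : d₀ ∣ q₀ := Nat.gcd_dvd_left _ _
  have hd₀r : d₀ ∣ r₀ := Nat.gcd_dvd_right _ _
  have hd₀pos : 0 < d₀ := Nat.pos_of_dvd_of_pos hd₀q hq₀pos
  have hpd₀ : ¬ p ∣ d₀ := fun h => hpq₀ (h.trans hd₀q)
  have hdpos : 0 < d := by rw [hdeq]; exact Nat.mul_pos (pow_pos hp.pos _) hd₀pos
  have hβpos : 0 < β := by
    rcases (Nat.Prime.dvd_mul hp).1 hpqr with h | h
    · have : 0 < α := hp.factorization_pos_of_dvd hq.ne' h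
      omega
    · exact hp.factorization_pos_of_dvd hr.ne' h
  obtain ⟨qd, hqd⟩ := hd₀q
  obtain ⟨rd, hrd⟩ := hd₀r
  have hd₀q : d₀ ∣ q₀ := Dvd.intro qd hqd.symm
  have hd₀r : d₀ ∣ r₀ := Dvd.intro rd hrd.symm
  have hqddiv : q / d = qd := by
    have hqe : q = d * qd := by rw [hq0, hqd, hdeq]; ring
    rw [hqe]
    exact Nat.mul_div_cancel_left _ hdpos
  have hrddiv : r / d = p ^ (β - α) * rd := by
    have hre : r = d * (p ^ (β - α) * rd) := by
      rw [hr0, hrd, hdeq, show p ^ β = p ^ α * p ^ (β - α) by rw [← pow_add]; congr 1; omega]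
      ring
    rw [hre]
    exact Nat.mul_div_cancel_left _ hdpos
  have hq₀div : q₀ / d₀ = qd := by rw [hqd]; exact Nat.mul_div_cancel_left _ hd₀pos
  have hr₀div : r₀ / d₀ = rd := by rw [hrd]; exact Nat.mul_div_cancel_left _ hd₀pos
  have hpqd : ¬ p ∣ qd := fun h => hpq₀ (hqd ▸ h.mul_left d₀)
  have hprd : ¬ p ∣ rd := fun h => hpr₀ (hrd ▸ h.mul_left d₀)
  have hmeas : q₀ * r₀ ≤ N := by
    have h2 : 2 ≤ p ^ (α + β) := by
      calc 2 ≤ p := hp.two_le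
      _ = p ^ 1 := (pow_one p).symm
      _ ≤ p ^ (α + β) := Nat.pow_le_pow_right hp.pos (by omega)
    have hqr : q * r = p ^ (α + β) * (q₀ * r₀) := by rw [hq0, hr0, pow_add]; ring
    nlinarith [Nat.mul_pos hq₀pos hr₀pos]
  have hφd : (d.totient : ℚ) = ((p ^ α).totient : ℚ) * (d₀.totient : ℚ) := by
    rw [hdeq, Nat.totient_mul (Nat.Coprime.pow_left _ ((Nat.Prime.coprime_iff_not_dvd hp).2 hpd₀))]
    push_cast; ring
  rcases Nat.lt_or_ge α β with hlt | hge
  · -- CASE A : α < β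
    have hpd' : ¬ p ∣ d' := by
      intro hcon
      have h1 : p ∣ Nat.gcd d' (r / d) := Nat.dvd_gcd hcon (by
        rw [hrddiv]
        exact Dvd.dvd.mul_right (dvd_pow_self p (by omega : β - α ≠ 0)) rd)
      rw [Nat.Coprime] at hd'3
      rw [hd'3] at h1
      exact hp.one_lt.ne' (Nat.dvd_one.1 h1)
    have hcopd'p : Nat.Coprime d' (p ^ α) :=
      Nat.Coprime.pow_right _ (((Nat.Prime.coprime_iff_not_dvd hp).2 hpd').symm)
    have hd'd₀ : d' ∣ d₀ := by
      have h1 : d' ∣ p ^ α * d₀ := hdeq ▸ hd'1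
      exact Nat.Coprime.dvd_of_dvd_mul_left hcopd'p h1
    have hcod'rd : Nat.Coprime d' rd := by
      apply Nat.Coprime.coprime_dvd_right (Dvd.intro_left _ rfl : rd ∣ p ^ (β - α) * rd)
      rwa [hrddiv] at hd'3
    have hmax₀ : ∀ e : ℕ, e ∣ d₀ → Nat.Coprime e (q₀ / d₀) → Nat.Coprime e (r₀ / d₀) → e ∣ d' := by
      intro e he1 he2 he3
      apply hd'max e
      · rw [hdeq]; exact Dvd.dvd.mul_left he1 _
      · rw [hqddiv, ← hq₀div]; exact he2
      · rw [hrddiv]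
        have hpe : ¬ p ∣ e := fun h => hpd₀ (h.trans he1)
        have hcp : Nat.Coprime e (p ^ (β - α)) :=
          Nat.Coprime.pow_right _ (((Nat.Prime.coprime_iff_not_dvd hp).2 hpe).symm)
        rw [hr₀div] at he3
        exact Nat.Coprime.mul_right hcp he3
    have hIH := IH q₀ r₀ d₀ d' hmeas hq₀pos hr₀pos hd₀def hd'd₀
      (by rw [hq₀div, ← hqddiv]; exact hd'2) (by rw [hr₀div]; exact hcod'rd) hmax₀
    have hcopq : Nat.Coprime (p ^ α) q₀ :=
      Nat.Coprime.pow_left _ ((Nat.Prime.coprime_iff_not_dvd hp).2 hpq₀)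
    have hcopr : Nat.Coprime (p ^ β) r₀ :=
      Nat.Coprime.pow_left _ ((Nat.Prime.coprime_iff_not_dvd hp).2 hpr₀)
    have hFq : F q = F (p ^ α) * F q₀ := by
      rw [F_mul_F_coprime (pow_pos hp.pos _) hq₀pos hcopq, ← hq0]
    have hFr : F r = F (p ^ β) * F r₀ := by
      rw [F_mul_F_coprime (pow_pos hp.pos _) hr₀pos hcopr, ← hr0]
    calc F q * F r = (F (p^α) * F (p^β)) * (F q₀ * F r₀) := by rw [hFq, hFr]; ring
    _ = (((p^α).totient : ℚ) • F (p^β)) *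
        ((d₀.totient : ℚ) • ∑ e ∈ d'.divisors, c d' e • F (q₀ * r₀ / (d₀ * e))) := by
        rw [F_mul_F_ppow_lt hp hlt, hIH]
    _ = (d.totient : ℚ) • ∑ e ∈ d'.divisors, c d' e • F (q * r / (d * e)) := by
        rw [smul_mul_smul', hφd]
        congr 1
        rw [Finset.mul_sum]
        apply Finset.sum_congr rfl
        intro e he
        rw [mul_smul_comm]
        congr 1
        obtain ⟨he1, -⟩ := Nat.mem_divisors.1 he
        have hed₀ : e ∣ d₀ := he1.trans hd'd₀
        have hepos : 0 < e := Nat.pos_of_dvd_of_pos he1 (Nat.pos_of_dvd_of_pos hd'1 hdpos)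
        have hdd : d₀ * e ∣ q₀ * r₀ := mul_dvd_mul hd₀q (hed₀.trans hd₀r)
        obtain ⟨s, hs⟩ := hdd
        have hs1 : q₀ * r₀ / (d₀ * e) = s := by
          rw [hs]; exact Nat.mul_div_cancel_left _ (Nat.mul_pos hd₀pos hepos)
        have hspos : 0 < s := by
          rcases Nat.eq_zero_or_pos s with rfl | h
          · rw [mul_zero] at hs
            exact absurd hs (Nat.mul_pos hq₀pos hr₀pos).ne'
          · exact h
        have hs2 : q * r / (d * e) = p ^ β * s := by
          have hqr : q * r = (d * e) * (p ^ β * s) := by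
            rw [hq0, hr0, hdeq]
            calc p ^ α * q₀ * (p ^ β * r₀) = p ^ α * p ^ β * (q₀ * r₀) := by ring
            _ = p ^ α * p ^ β * (d₀ * e * s) := by rw [hs]
            _ = p ^ α * d₀ * e * (p ^ β * s) := by ring
          rw [hqr]; exact Nat.mul_div_cancel_left _ (Nat.mul_pos hdpos hepos)
        have hcops : Nat.Coprime (p ^ β) s := by
          apply Nat.Coprime.pow_left
          apply (Nat.Prime.coprime_iff_not_dvd hp).2
          intro hcon
          have hps : p ∣ q₀ * r₀ := hs ▸ hcon.mul_left _
          rcases (Nat.Prime.dvd_mul hp).1 hps with h | h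
          exacts [hpq₀ h, hpr₀ h]
        rw [hs1, hs2, F_mul_F_coprime (pow_pos hp.pos _) hspos hcops]
  · -- CASE B : α = β
    have hab : β = α := le_antisymm hge hαβ
    have hαpos : 0 < α := by omega
    have hrddiv' : r / d = rd := by
      rw [hrddiv, show β - α = 0 by omega, pow_zero, one_mul]
    set d₀' := ordCompl[p] d' with hd₀'def
    have hd'pos : 0 < d' := Nat.pos_of_dvd_of_pos hd'1 hdpos
    have hpd₀' : ¬ p ∣ d₀' := Nat.not_dvd_ordCompl hp hd'pos.ne'
    have hd₀'pos : 0 < d₀' := Nat.ordCompl_pos p hd'pos.ne'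
    have hd₀'d' : d₀' ∣ d' := Nat.ordCompl_dvd d' p
    have hcopd₀'p : Nat.Coprime d₀' (p ^ α) :=
      Nat.Coprime.pow_right _ (((Nat.Prime.coprime_iff_not_dvd hp).2 hpd₀').symm)
    have hd₀'d₀ : d₀' ∣ d₀ := by
      have h1 : d₀' ∣ p ^ α * d₀ := hdeq ▸ (hd₀'d'.trans hd'1)
      exact Nat.Coprime.dvd_of_dvd_mul_left hcopd₀'p h1
    have hco_pα_qd : Nat.Coprime (p ^ α) qd :=
      Nat.Coprime.pow_left _ ((Nat.Prime.coprime_iff_not_dvd hp).2 hpqd)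
    have hco_pα_rd : Nat.Coprime (p ^ α) rd :=
      Nat.Coprime.pow_left _ ((Nat.Prime.coprime_iff_not_dvd hp).2 hprd)
    have hco_d₀'_qd : Nat.Coprime d₀' qd := by
      apply Nat.Coprime.coprime_dvd_left hd₀'d'
      rwa [hqddiv] at hd'2
    have hco_d₀'_rd : Nat.Coprime d₀' rd := by
      apply Nat.Coprime.coprime_dvd_left hd₀'d'
      rwa [hrddiv'] at hd'3
    have hdfacp : d.factorization p = α := by
      rw [hdeq, Nat.factorization_mul (pow_ne_zero _ hp.pos.ne') hd₀pos.ne']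
      simp [hp.factorization_pow, Nat.factorization_eq_zero_of_not_dvd hpd₀]
    have hdvd1 : p ^ α * d₀' ∣ d' := by
      apply hd'max
      · rw [hdeq]; exact mul_dvd_mul_left _ hd₀'d₀
      · rw [hqddiv]; exact Nat.Coprime.mul hco_pα_qd hco_d₀'_qd
      · rw [hrddiv']; exact Nat.Coprime.mul hco_pα_rd hco_d₀'_rd
    have hd'eq : d' = p ^ α * d₀' := by
      have hv : d'.factorization p = α := by
        have h1 : d'.factorization p ≤ α := by
          rw [← hdfacp]
          exact (Nat.factorization_le_iff_dvd hd'pos.ne' hdpos.ne').2 hd'1 p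
        have h2 : α ≤ d'.factorization p :=
          (Nat.Prime.pow_dvd_iff_le_factorization hp hd'pos.ne').1
            ((dvd_mul_right _ _).trans hdvd1)
        omega
      conv_lhs => rw [← Nat.ordProj_mul_ordCompl_eq_self d' p]
      rw [hv, hd₀'def, hv]
    have hmax₀ : ∀ e : ℕ, e ∣ d₀ → Nat.Coprime e (q₀ / d₀) → Nat.Coprime e (r₀ / d₀) →
        e ∣ d₀' := by
      intro e he1 he2 he3
      have hed' : e ∣ d' := by
        apply hd'max e
        · rw [hdeq]; exact Dvd.dvd.mul_left he1 _
        · rw [hqddiv, ← hq₀div]; exact he2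
        · rw [hrddiv', ← hr₀div]; exact he3
      have hpe : ¬ p ∣ e := fun h => hpd₀ (h.trans he1)
      rw [hd'eq] at hed'
      exact Nat.Coprime.dvd_of_dvd_mul_left
        (Nat.Coprime.pow_right _ (((Nat.Prime.coprime_iff_not_dvd hp).2 hpe).symm)) hed'
    have hIH := IH q₀ r₀ d₀ d₀' hmeas hq₀pos hr₀pos hd₀def hd₀'d₀
      (by rw [hq₀div]; exact hco_d₀'_qd) (by rw [hr₀div]; exact hco_d₀'_rd) hmax₀
    have hn₀ : ∀ e₀ ∈ d₀'.divisors,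
        (d₀ * e₀) * (q₀ * r₀ / (d₀ * e₀)) = q₀ * r₀ ∧ 0 < q₀ * r₀ / (d₀ * e₀) ∧
          ¬ p ∣ (q₀ * r₀ / (d₀ * e₀)) := by
      intro e₀ he₀
      obtain ⟨he1, -⟩ := Nat.mem_divisors.1 he₀
      have hed : e₀ ∣ r₀ := (he1.trans hd₀'d₀).trans hd₀r
      have hdd : d₀ * e₀ ∣ q₀ * r₀ := mul_dvd_mul hd₀q hed
      have h1 : (d₀ * e₀) * (q₀ * r₀ / (d₀ * e₀)) = q₀ * r₀ := Nat.mul_div_cancel' hdd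
      have h2 : 0 < q₀ * r₀ / (d₀ * e₀) := by
        rcases Nat.eq_zero_or_pos (q₀ * r₀ / (d₀ * e₀)) with h0 | h
        · rw [h0, mul_zero] at h1
          exact absurd h1 (Nat.mul_pos hq₀pos hr₀pos).ne
        · exact h
      refine ⟨h1, h2, fun hcon => ?_⟩
      have hps : p ∣ q₀ * r₀ := h1 ▸ (hcon.mul_left _)
      rcases (Nat.Prime.dvd_mul hp).1 hps with h | h
      exacts [hpq₀ h, hpr₀ h]
    have harith : ∀ i, i ≤ α → ∀ e₀ ∈ d₀'.divisors,
        q * r / (d * (p ^ i * e₀)) = p ^ (α - i) * (q₀ * r₀ / (d₀ * e₀)) := by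
      intro i hi e₀ he₀
      obtain ⟨h1, h2, -⟩ := hn₀ e₀ he₀
      have he₀pos : 0 < e₀ :=
        Nat.pos_of_dvd_of_pos (Nat.mem_divisors.1 he₀).1 hd₀'pos
      have hqr : q * r = (d * (p ^ i * e₀)) * (p ^ (α - i) * (q₀ * r₀ / (d₀ * e₀))) := by
        rw [hq0, hr0, hdeq, hab]
        calc p ^ α * q₀ * (p ^ α * r₀)
            = p ^ α * p ^ α * (q₀ * r₀) := by ring
          _ = p ^ α * p ^ α * ((d₀ * e₀) * (q₀ * r₀ / (d₀ * e₀))) := by rw [h1]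
          _ = p ^ α * (p ^ i * p ^ (α - i)) * ((d₀ * e₀) * (q₀ * r₀ / (d₀ * e₀))) := by
              rw [show p ^ i * p ^ (α - i) = p ^ α by
                rw [← pow_add]; congr 1; omega]
          _ = p ^ α * d₀ * (p ^ i * e₀) * (p ^ (α - i) * (q₀ * r₀ / (d₀ * e₀))) := by ring
      rw [hqr]
      exact Nat.mul_div_cancel_left _
        (Nat.mul_pos hdpos (Nat.mul_pos (pow_pos hp.pos _) he₀pos))
    have hφα : ((p ^ α).totient : ℚ) = (p:ℚ) ^ (α - 1) * ((p:ℚ) - 1) := by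
      rw [Nat.totient_prime_pow hp hαpos]
      push_cast [Nat.cast_sub hp.one_le]
      ring
    have hp1 : ((p:ℚ) - 1) ≠ 0 := by
      have : (2:ℚ) ≤ p := by exact_mod_cast hp.two_le
      linarith
    have hcoef : ∀ j : ℕ,
        (if j = α then ((p^α).totient:ℚ) - ((p^(α-1):ℕ):ℚ) else ((p^α).totient:ℚ))
            * (d₀.totient:ℚ)
          = (if j = α then (d.totient:ℚ) * (1 - 1/((p:ℚ)-1)) else (d.totient:ℚ)) := by
      intro j
      by_cases hj : j = α
      · rw [if_pos hj, if_pos hj, hφd, hφα]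
        push_cast
        field_simp
      · rw [if_neg hj, if_neg hj, hφd]
    have hcoprα : Nat.Coprime (p ^ α) r₀ :=
      Nat.Coprime.pow_left _ ((Nat.Prime.coprime_iff_not_dvd hp).2 hpr₀)
    have hcopq : Nat.Coprime (p ^ α) q₀ :=
      Nat.Coprime.pow_left _ ((Nat.Prime.coprime_iff_not_dvd hp).2 hpq₀)
    have hFq : F q = F (p ^ α) * F q₀ := by
      rw [F_mul_F_coprime (pow_pos hp.pos _) hq₀pos hcopq, ← hq0]
    have hFr : F r = F (p ^ α) * F r₀ := by
      have hr0' : p ^ α * r₀ = r := by rw [hr0, hab]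
      rw [F_mul_F_coprime (pow_pos hp.pos _) hr₀pos hcoprα, hr0']
    have hHexp : H (p ^ α) = ∑ j ∈ Finset.range (α + 1), F (p ^ j) := by
      rw [H_eq_sum_F (pow_pos hp.pos _), Nat.sum_divisors_prime_pow hp]
    have hcomb : ((p^α).totient : ℚ) • H (p ^ α) - ((p^(α-1):ℕ):ℚ) • F (p ^ α)
        = ∑ j ∈ Finset.range (α + 1),
            (if j = α then ((p^α).totient:ℚ) - ((p^(α-1):ℕ):ℚ) else ((p^α).totient:ℚ))
              • F (p ^ j) := by
      rw [hHexp, Finset.smul_sum, Finset.sum_range_succ, Finset.sum_range_succ,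
        if_pos rfl, sub_smul]
      have hcg : ∀ j ∈ Finset.range α,
          (if j = α then ((p^α).totient:ℚ) - ((p^(α-1):ℕ):ℚ) else ((p^α).totient:ℚ))
            • F (p ^ j) = ((p^α).totient:ℚ) • F (p ^ j) := by
        intro j hj
        rw [if_neg (by rw [Finset.mem_range] at hj; omega)]
      rw [Finset.sum_congr rfl hcg]
      abel
    have hexpand : ∀ (a : ℚ) (A : AddMonoidAlgebra ℚ (AddCircle (1:ℚ))),
        (a • A) * ((d₀.totient:ℚ) • ∑ e₀ ∈ d₀'.divisors,
            c d₀' e₀ • F (q₀ * r₀ / (d₀ * e₀)))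
          = ∑ e₀ ∈ d₀'.divisors,
              (a * ((d₀.totient:ℚ) * c d₀' e₀)) • (A * F (q₀ * r₀ / (d₀ * e₀))) := by
      intro a A
      rw [smul_mul_assoc, mul_smul_comm, Finset.mul_sum, Finset.smul_sum, Finset.smul_sum]
      apply Finset.sum_congr rfl
      intro e₀ _
      rw [mul_smul_comm, smul_smul, smul_smul, mul_assoc]
    have hpe₀' : ∀ e₀ ∈ d₀'.divisors, ¬ p ∣ e₀ := by
      intro e₀ he₀
      exact fun h => hpd₀' (h.trans (Nat.mem_divisors.1 he₀).1)
    calc F q * F r = (F (p^α) * F (p^α)) * (F q₀ * F r₀) := by rw [hFq, hFr]; ring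
    _ = (∑ j ∈ Finset.range (α+1),
          (if j = α then ((p^α).totient:ℚ) - ((p^(α-1):ℕ):ℚ) else ((p^α).totient:ℚ))
            • F (p ^ j))
        * ((d₀.totient : ℚ) • ∑ e₀ ∈ d₀'.divisors,
            c d₀' e₀ • F (q₀ * r₀ / (d₀ * e₀))) := by
        rw [F_ppow_sq hp hαpos, hIH, hcomb]
    _ = ∑ j ∈ Finset.range (α+1), ∑ e₀ ∈ d₀'.divisors,
          ((if j = α then (d.totient:ℚ) * (1 - 1/((p:ℚ)-1)) else (d.totient:ℚ)) * c d₀' e₀)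
            • F (p ^ j * (q₀ * r₀ / (d₀ * e₀))) := by
        rw [Finset.sum_mul]
        apply Finset.sum_congr rfl
        intro j _
        rw [hexpand]
        apply Finset.sum_congr rfl
        intro e₀ he₀
        obtain ⟨-, h2, h3⟩ := hn₀ e₀ he₀
        rw [F_mul_F_coprime (pow_pos hp.pos _) h2
          (Nat.Coprime.pow_left _ ((Nat.Prime.coprime_iff_not_dvd hp).2 h3))]
        congr 1
        rw [← mul_assoc, hcoef j]
    _ = (d.totient : ℚ) • ∑ e ∈ d'.divisors, c d' e • F (q * r / (d * e)) := by
        rw [hd'eq, sum_divisors_coprime_mul (Nat.Coprime.pow_left _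
            ((Nat.Prime.coprime_iff_not_dvd hp).2 hpd₀')) (pow_ne_zero _ hp.pos.ne')
            hd₀'pos.ne', Nat.sum_divisors_prime_pow hp, Finset.smul_sum]
        conv_rhs => rw [← Finset.sum_range_reflect]
        apply Finset.sum_congr rfl
        intro j hj
        rw [Finset.mem_range] at hj
        rw [Finset.smul_sum]
        apply Finset.sum_congr rfl
        intro e₀ he₀
        rw [show α + 1 - 1 - j = α - j by omega]
        rw [c_ppow_mul hp hαpos.ne' hpd₀' hd₀'pos.ne' (hpe₀' e₀ he₀),
          harith (α - j) (by omega) e₀ he₀, smul_smul,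
          show α - (α - j) = j by omega]
        congr 1
        by_cases hjα : j = α
        · rw [if_pos hjα, if_pos (show α - j = 0 by omega)]
          ring
        · rw [if_neg hjα, if_neg (show ¬ (α - j = 0) by omega)]
          ring

end FStuff
namespace FStuff

lemma key : ∀ N q r d d' : ℕ, q * r ≤ N → 0 < q → 0 < r → d = Nat.gcd q r → d' ∣ d →
    Nat.Coprime d' (q / d) → Nat.Coprime d' (r / d) →
    (∀ e : ℕ, e ∣ d → Nat.Coprime e (q / d) → Nat.Coprime e (r / d) → e ∣ d') →
    F q * F r = (Nat.totient d : ℚ) • ∑ e ∈ d'.divisors, c d' e • F (q * r / (d * e)) := by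
  intro N
  induction N with
  | zero =>
    intro q r d d' hN hq hr _ _ _ _ _
    exfalso
    have := Nat.mul_pos hq hr
    omega
  | succ N IH =>
    intro q r d d' hN hq hr hd hd'1 hd'2 hd'3 hd'max
    by_cases h1 : q * r = 1
    · have hq1 : q = 1 := Nat.dvd_one.1 ⟨r, h1.symm⟩
      have hr1 : r = 1 := Nat.dvd_one.1 ⟨q, by rw [mul_comm]; exact h1.symm⟩
      subst hq1
      subst hr1
      have hd1 : d = 1 := by simpa using hd
      subst hd1
      have hd'one : d' = 1 := Nat.dvd_one.1 hd'1
      subst hd'one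
      rw [F_one]
      simp [c, F_one]
    · have hp : (q*r).minFac.Prime := Nat.minFac_prime h1
      have hpqr : (q*r).minFac ∣ q * r := Nat.minFac_dvd _
      rcases le_total (q.factorization ((q*r).minFac)) (r.factorization ((q*r).minFac))
        with hle | hle
      · exact keyStep N IH q r d d' hN hq hr hd hd'1 hd'2 hd'3 hd'max _ hp hpqr hle
      · have hsym := keyStep N IH r q d d' (by rwa [mul_comm]) hr hq
          (by rw [hd, Nat.gcd_comm]) hd'1 hd'3 hd'2
          (fun e he ha hb => hd'max e he hb ha) _ hp (by rw [mul_comm r q]; exact hpqr) hle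
        rw [mul_comm r q] at hsym
        calc F q * F r = F r * F q := mul_comm _ _
        _ = _ := hsym

end FStuff

theorem stmt_5 (q r d d' : ℕ) (hq : 0 < q) (hr : 0 < r)
    (hd : d = Nat.gcd q r)
    (hd'1 : d' ∣ d) (hd'2 : Nat.Coprime d' (q / d)) (hd'3 : Nat.Coprime d' (r / d))
    (hd'max : ∀ e : ℕ, e ∣ d → Nat.Coprime e (q / d) → Nat.Coprime e (r / d) → e ∣ d') :
    F q * F r
      = (Nat.totient d : ℚ) • ∑ e ∈ d'.divisors, c d' e • F (q * r / (d * e)) :=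
  FStuff.key (q * r) q r d d' le_rfl hq hr hd hd'1 hd'2 hd'3 hd'max
end

section
/- Let q and r be squarefree positive integers with d = gcd(q, r). Then in the group algebra ℚ[ℚ/ℤ], F_q · F_r = φ(d) · ∑_{e | d} (∏_{p | e} (p−2)/(p−1)) · F_{qre/d²}, where the product is over primes p dividing e. -/
open Finset AddCircle

noncomputable def G (n : ℕ) : AddMonoidAlgebra ℚ (AddCircle (1 : ℚ)) :=
  ∑ a ∈ Finset.range n,
    AddMonoidAlgebra.single (((a : ℚ) / n : ℚ) : AddCircle (1 : ℚ)) 1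

lemma coe_nat_zero (k : ℕ) : ((k : ℚ) : AddCircle (1:ℚ)) = 0 := by
  induction k with
  | zero => simp
  | succ n ih => push_cast; rw [AddCircle.coe_add, ih, AddCircle.coe_period, add_zero]

lemma coe_mod (N x : ℕ) (hN : 0 < N) :
    (((x : ℚ) / N : ℚ) : AddCircle (1:ℚ)) = (((x % N : ℕ) : ℚ) / N : ℚ) := by
  have hx : (x : ℚ) = ((x / N : ℕ) : ℚ) * N + ((x % N : ℕ) : ℚ) := by
    rw [← Nat.cast_mul, ← Nat.cast_add, Nat.div_add_mod']
  have hN' : (N : ℚ) ≠ 0 := Nat.cast_ne_zero.2 hN.ne'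
  rw [hx, add_div, mul_div_cancel_right₀ _ hN', AddCircle.coe_add, coe_nat_zero, zero_add]

lemma coe_inj {N a b : ℕ} (ha : a < N) (hb : b < N) (hN : 0 < N)
    (h : (((a : ℚ) / N : ℚ) : AddCircle (1:ℚ)) = ((b : ℚ) / N : ℚ)) : a = b := by
  have hN' : (0:ℚ) < N := by exact_mod_cast hN
  have : (a : ℚ) / N = (b : ℚ) / N := by
    rw [← AddCircle.coe_eq_coe_iff_of_mem_Ico (a := (0:ℚ)) ⟨by positivity, by
        rw [zero_add]; exact (div_lt_one hN').2 (by exact_mod_cast ha)⟩ ⟨by positivity, by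
        rw [zero_add]; exact (div_lt_one hN').2 (by exact_mod_cast hb)⟩]
    exact h
  field_simp at this
  exact_mod_cast this

lemma single_mul (x y : AddCircle (1:ℚ)) :
    (AddMonoidAlgebra.single x (1:ℚ)) * AddMonoidAlgebra.single y (1:ℚ)
      = AddMonoidAlgebra.single (x + y) (1:ℚ) := by
  rw [AddMonoidAlgebra.single_mul_single, one_mul]

lemma coe_div_add_coe_div (n a b : ℕ) (hn : 0 < n) :
    (((a : ℚ) / n : ℚ) : AddCircle (1:ℚ)) + (((b : ℚ) / n : ℚ) : AddCircle (1:ℚ))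
      = ((((a + b) % n : ℕ) : ℚ) / n : ℚ) := by
  rw [← AddCircle.coe_add, ← add_div, ← Nat.cast_add, coe_mod _ _ hn]

lemma mod_shift (n a b : ℕ) (hn : 0 < n) (ha : a < n) : (a + b + (n - b % n)) % n = a := by
  have h1 : b % n ≤ b := Nat.mod_le b n
  have h2 : b % n < n := Nat.mod_lt _ hn
  have h3 : n * (b / n) + b % n = b := Nat.div_add_mod b n
  set t := n * (b / n) with ht
  have e : a + b + (n - b % n) = a + t + n := by omega
  rw [e, Nat.add_mod_right, ht, Nat.add_mul_mod_self_left, Nat.mod_eq_of_lt ha]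

lemma G_shift (n b : ℕ) (hn : 0 < n) :
    G n * AddMonoidAlgebra.single (((b : ℚ) / n : ℚ) : AddCircle (1 : ℚ)) 1 = G n := by
  rw [G, Finset.sum_mul]
  simp only [single_mul]
  simp only [coe_div_add_coe_div _ _ _ hn]

  refine Finset.sum_nbij' (i := fun a => (a + b) % n) (j := fun c => (c + (n - b % n)) % n)
    ?_ ?_ ?_ ?_ ?_
  · intro a _; exact Finset.mem_range.2 (Nat.mod_lt _ hn)
  · intro a _; exact Finset.mem_range.2 (Nat.mod_lt _ hn)
  · intro a ha
    show ((a + b) % n + (n - b % n)) % n = a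
    rw [Nat.mod_add_mod]
    exact mod_shift n a b hn (Finset.mem_range.1 ha)
  · intro c hc
    show ((c + (n - b % n)) % n + b) % n = c
    rw [Nat.mod_add_mod, show c + (n - b % n) + b = c + b + (n - b % n) by omega]
    exact mod_shift n c b hn (Finset.mem_range.1 hc)
  · intro a _; rfl

lemma F_one : F 1 = 1 := by
  rw [F]
  rw [show (Finset.range 1).filter (fun a => Nat.Coprime a 1) = {0} by decide]
  rw [Finset.sum_singleton]
  norm_num
  rfl

lemma G_sq (p : ℕ) (hp : 0 < p) : G p * G p = (p : ℚ) • G p := by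
  have h : G p * G p = ∑ b ∈ Finset.range p,
      G p * AddMonoidAlgebra.single (((b : ℚ) / p : ℚ) : AddCircle (1:ℚ)) 1 := by
    rw [← Finset.mul_sum]; rfl
  rw [h, Finset.sum_congr rfl (fun b _ => G_shift p b hp), Finset.sum_const,
    Finset.card_range, ← Nat.cast_smul_eq_nsmul ℚ]

lemma G_eq_one_add_F (p : ℕ) (hp : p.Prime) : G p = 1 + F p := by
  have hfilter : (Finset.range p).filter (fun a => Nat.Coprime a p)
      = (Finset.range p).erase 0 := by
    ext a
    simp only [Finset.mem_filter, Finset.mem_erase, Finset.mem_range]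
    constructor
    · rintro ⟨h1, h2⟩
      refine ⟨fun h0 => ?_, h1⟩
      subst h0
      simp [Nat.coprime_zero_left] at h2
      exact hp.one_lt.ne' h2
    · rintro ⟨h0, h1⟩
      refine ⟨h1, (Nat.coprime_comm.2 ((hp.coprime_iff_not_dvd).2 fun hd => ?_))⟩
      exact h0 (Nat.eq_zero_of_dvd_of_lt hd h1)
  rw [G, F, hfilter, ← Finset.add_sum_erase _ _ (Finset.mem_range.2 hp.pos)]
  congr 1
  norm_num
  rfl

lemma F_p_sq (p : ℕ) (hp : p.Prime) :
    F p * F p = ((p:ℚ) - 1) • (1 : AddMonoidAlgebra ℚ (AddCircle (1:ℚ)))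
      + ((p:ℚ) - 2) • F p := by
  have h1 : F p = G p - 1 := by rw [G_eq_one_add_F p hp]; ring
  have h2 := G_sq p hp.pos
  rw [h1]
  have : (G p - 1) * (G p - 1) = G p * G p - 2 * G p + 1 := by ring
  rw [this, h2]
  simp only [Algebra.smul_def, map_sub, map_one, map_ofNat]
  ring

lemma coprime_mod_iff (x N : ℕ) : Nat.Coprime (x % N) N ↔ Nat.Coprime x N := by
  unfold Nat.Coprime
  rw [← Nat.gcd_rec, Nat.gcd_comm]

lemma coe_add_frac (m n a b : ℕ) (hm : 0 < m) (hn : 0 < n) :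
    (((a : ℚ) / m : ℚ) : AddCircle (1:ℚ)) + (((b : ℚ) / n : ℚ) : AddCircle (1:ℚ))
      = (((((a * n + b * m) % (m * n) : ℕ) : ℚ) / ((m * n : ℕ) : ℚ) : ℚ) : AddCircle (1:ℚ)) := by
  rw [← AddCircle.coe_add, ← coe_mod _ _ (Nat.mul_pos hm hn)]
  congr 1
  have hm' : (m : ℚ) ≠ 0 := Nat.cast_ne_zero.2 hm.ne'
  have hn' : (n : ℚ) ≠ 0 := Nat.cast_ne_zero.2 hn.ne'
  push_cast
  field_simp

lemma F_mul (m n : ℕ) (hm : 0 < m) (hn : 0 < n) (h : Nat.Coprime m n) :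
    F m * F n = F (m * n) := by
  have hmn : 0 < m * n := Nat.mul_pos hm hn
  rw [F, F, Finset.sum_mul_sum]
  simp only [single_mul]
  simp only [coe_add_frac m n _ _ hm hn]
  rw [← Finset.sum_product']
  set Am := (Finset.range m).filter (fun a => Nat.Coprime a m) with hAm
  set An := (Finset.range n).filter (fun a => Nat.Coprime a n) with hAn
  set i : ℕ × ℕ → ℕ := fun ab => (ab.1 * n + ab.2 * m) % (m * n) with hi
  have hmem : ∀ ab ∈ Am ×ˢ An, i ab ∈ (Finset.range (m*n)).filter
      (fun c => Nat.Coprime c (m*n)) := by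
    rintro ⟨a, b⟩ hab
    rw [Finset.mem_product, hAm, hAn, Finset.mem_filter, Finset.mem_filter] at hab
    obtain ⟨⟨-, ham⟩, ⟨-, hbn⟩⟩ := hab
    rw [Finset.mem_filter, Finset.mem_range]
    refine ⟨Nat.mod_lt _ hmn, ?_⟩
    rw [hi]
    simp only
    rw [coprime_mod_iff]
    refine Nat.Coprime.mul_right ?_ ?_
    · rw [Nat.coprime_add_mul_right_left]
      exact Nat.Coprime.mul ham h.symm
    · rw [add_comm, Nat.coprime_add_mul_right_left]
      exact Nat.Coprime.mul hbn h
  have hinj : ∀ x ∈ Am ×ˢ An, ∀ y ∈ Am ×ˢ An, i x = i y → x = y := by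
    rintro ⟨a1, b1⟩ hx ⟨a2, b2⟩ hy heq
    rw [Finset.mem_product, hAm, hAn, Finset.mem_filter, Finset.mem_filter] at hx hy
    obtain ⟨⟨ha1, -⟩, ⟨hb1, -⟩⟩ := hx
    obtain ⟨⟨ha2, -⟩, ⟨hb2, -⟩⟩ := hy
    rw [Finset.mem_range] at ha1 ha2 hb1 hb2
    have hmod : a1 * n + b1 * m ≡ a2 * n + b2 * m [MOD m * n] := heq
    have hb0 : ∀ b : ℕ, b * m ≡ 0 [MOD m] := fun b => by
      simp [Nat.ModEq, Nat.mul_mod_left]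
    have ha0 : ∀ a : ℕ, a * n ≡ 0 [MOD n] := fun a => by
      simp [Nat.ModEq, Nat.mul_mod_left]
    have hma : a1 ≡ a2 [MOD m] := by
      have h1 : a1 * n ≡ a2 * n [MOD m] :=
        ((hb0 b1).trans (hb0 b2).symm).add_right_cancel (hmod.of_mul_right n)
      exact h1.cancel_right_of_coprime h
    have hnb : b1 ≡ b2 [MOD n] := by
      have h0 : a1 * n + b1 * m ≡ a2 * n + b2 * m [MOD n] := hmod.of_mul_left m
      rw [add_comm (a1 * n), add_comm (a2 * n)] at h0
      have h1 : b1 * m ≡ b2 * m [MOD n] :=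
        ((ha0 a1).trans (ha0 a2).symm).add_right_cancel h0
      exact h1.cancel_right_of_coprime (Nat.gcd_comm m n ▸ h)
    exact Prod.ext (hma.eq_of_lt_of_lt ha1 ha2) (hnb.eq_of_lt_of_lt hb1 hb2)
  have hcardAm : Am.card = Nat.totient m := by
    rw [Nat.totient_eq_card_coprime, hAm]
    congr 1
    apply Finset.filter_congr
    intro x _
    simp [Nat.coprime_comm]
  have hcardAn : An.card = Nat.totient n := by
    rw [Nat.totient_eq_card_coprime, hAn]
    congr 1
    apply Finset.filter_congr
    intro x _
    simp [Nat.coprime_comm]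
  have himg : (Am ×ˢ An).image i
      = (Finset.range (m*n)).filter (fun c => Nat.Coprime c (m*n)) := by
    apply Finset.eq_of_subset_of_card_le
    · intro c hc
      obtain ⟨ab, hab, rfl⟩ := Finset.mem_image.1 hc
      exact hmem ab hab
    · rw [Finset.card_image_of_injOn hinj, Finset.card_product, hcardAm, hcardAn]
      have : ((Finset.range (m*n)).filter (fun c => Nat.Coprime c (m*n))).card
          = Nat.totient (m * n) := by
        rw [Nat.totient_eq_card_coprime]
        congr 1
        apply Finset.filter_congr
        intro x _
        simp [Nat.coprime_comm]
      rw [this, Nat.totient_mul h]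
  rw [F, ← himg, Finset.sum_image hinj]

lemma sum_divisors_prime_mul {M : Type*} [AddCommMonoid M] {p m : ℕ} (hp : p.Prime)
    (hm : m ≠ 0) (hc : Nat.Coprime p m) (f : ℕ → M) :
    ∑ e ∈ (p * m).divisors, f e
      = ∑ e ∈ m.divisors, f e + ∑ e ∈ m.divisors, f (p * e) := by
  have hset : (p * m).divisors = m.divisors ∪ m.divisors.image (p * ·) := by
    ext e
    simp only [Nat.mem_divisors, Finset.mem_union, Finset.mem_image]
    constructor
    · rintro ⟨hd, -⟩
      by_cases hpe : p ∣ e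
      · obtain ⟨e', rfl⟩ := hpe
        exact Or.inr ⟨e', ⟨(Nat.mul_dvd_mul_iff_left hp.pos).1 hd, hm⟩, rfl⟩
      · left
        have hco : Nat.Coprime e p := Nat.coprime_comm.1 ((hp.coprime_iff_not_dvd).2 hpe)
        exact ⟨hco.dvd_of_dvd_mul_left hd, hm⟩
    · rintro (⟨hd, -⟩ | ⟨e', ⟨hd, -⟩, rfl⟩)
      · exact ⟨hd.mul_left p, mul_ne_zero hp.ne_zero hm⟩
      · exact ⟨mul_dvd_mul_left p hd, mul_ne_zero hp.ne_zero hm⟩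
  have hdisj : Disjoint m.divisors (m.divisors.image (p * ·)) := by
    rw [Finset.disjoint_left]
    intro e he he'
    obtain ⟨e', -, rfl⟩ := Finset.mem_image.1 he'
    have hpm : p ∣ m := dvd_trans (Dvd.intro e' rfl) (Nat.mem_divisors.1 he).1
    exact (hp.coprime_iff_not_dvd.1 hc) hpm
  rw [hset, Finset.sum_union hdisj, Finset.sum_image
    (fun a _ b _ hab => Nat.eq_of_mul_eq_mul_left hp.pos hab)]

lemma F_sq_of_squarefree : ∀ d : ℕ, Squarefree d →
    F d * F d = ∑ e ∈ d.divisors,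
      ((Nat.totient (d / e) : ℚ) * ∏ p ∈ e.primeFactors, ((p : ℚ) - 2)) • F e := by
  intro d
  induction d using Nat.strong_induction_on with
  | _ d ih =>
    intro hd
    have hd0 : d ≠ 0 := hd.ne_zero
    by_cases h1 : d = 1
    · subst h1
      simp [Nat.divisors_one, F_one]
    · set p := d.minFac with hpdef
      have hp : p.Prime := Nat.minFac_prime h1
      obtain ⟨m, hm⟩ : p ∣ d := d.minFac_dvd
      have hm0 : m ≠ 0 := by rintro rfl; simp [hm] at hd0
      have hmpos : 0 < m := Nat.pos_of_ne_zero hm0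
      have hpm : ¬ p ∣ m := by
        intro hdvd
        exact hp.not_isUnit (hd p (by rw [hm]; exact mul_dvd_mul_left p hdvd))
      have hcpm : Nat.Coprime p m := (hp.coprime_iff_not_dvd).2 hpm
      have hms : Squarefree m := hd.squarefree_of_dvd ⟨p, by rw [hm]; ring⟩
      have hmlt : m < d := by
        rw [hm]
        exact (Nat.lt_mul_iff_one_lt_left hmpos).2 hp.one_lt
      have IH := ih m hmlt hms
      have expand : F d * F d
          = ∑ e ∈ m.divisors,
              (((p:ℚ) - 1) * ((Nat.totient (m / e) : ℚ)
                * ∏ q ∈ e.primeFactors, ((q : ℚ) - 2))) • F e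
            + ∑ e ∈ m.divisors,
              (((p:ℚ) - 2) * ((Nat.totient (m / e) : ℚ)
                * ∏ q ∈ e.primeFactors, ((q : ℚ) - 2))) • (F p * F e) := by
        have : F d * F d = (F p * F p) * (F m * F m) := by
          rw [hm, ← F_mul p m hp.pos hmpos hcpm]; ring
        rw [this, F_p_sq p hp, IH, add_mul, smul_mul_assoc, smul_mul_assoc, one_mul,
          Finset.mul_sum, Finset.smul_sum, Finset.smul_sum]
        congr 1
        · exact Finset.sum_congr rfl fun e he => by rw [smul_smul]
        · exact Finset.sum_congr rfl fun e he => by rw [mul_smul_comm, smul_smul]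
      rw [expand, hm, sum_divisors_prime_mul hp hm0 hcpm]
      congr 1
      · apply Finset.sum_congr rfl
        intro e he
        obtain ⟨hedvd, -⟩ := Nat.mem_divisors.1 he
        have h2 : p * m / e = p * (m / e) := Nat.mul_div_assoc p hedvd
        have hco : Nat.Coprime p (m / e) := hcpm.coprime_dvd_right (Nat.div_dvd_of_dvd hedvd)
        rw [h2, Nat.totient_mul hco, Nat.totient_prime hp]
        congr 1
        push_cast [Nat.cast_sub hp.one_le]
        ring
      · apply Finset.sum_congr rfl
        intro e he
        obtain ⟨hedvd, -⟩ := Nat.mem_divisors.1 he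
        have he0 : e ≠ 0 := by rintro rfl; exact hm0 (zero_dvd_iff.1 hedvd)
        have hcpe : Nat.Coprime p e := hcpm.coprime_dvd_right hedvd
        have h2 : p * m / (p * e) = m / e := Nat.mul_div_mul_left m e hp.pos
        have hpnot : p ∉ e.primeFactors := fun hmem =>
          (hp.coprime_iff_not_dvd.1 hcpe) (Nat.dvd_of_mem_primeFactors hmem)
        have h3 : (p * e).primeFactors = {p} ∪ e.primeFactors := by
          rw [Nat.Coprime.primeFactors_mul hcpe, hp.primeFactors]
        rw [F_mul p e hp.pos (Nat.pos_of_ne_zero he0) hcpe, h2, h3,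
          Finset.prod_union (Finset.disjoint_singleton_left.2 hpnot),
          Finset.prod_singleton]
        congr 1
        ring

lemma cop_of_sq (a b : ℕ) (h : Squarefree (a * b)) : Nat.Coprime a b :=
  Nat.isUnit_iff.1 (h (Nat.gcd a b)
    (mul_dvd_mul (Nat.gcd_dvd_left a b) (Nat.gcd_dvd_right a b)))

lemma cop_div (d e : ℕ) (hd : Squarefree d) (he : e ∣ d) : Nat.Coprime (d / e) e := by
  have hg2 : Nat.gcd (d / e) e * Nat.gcd (d / e) e ∣ (d / e) * e :=
    mul_dvd_mul (Nat.gcd_dvd_left _ _) (Nat.gcd_dvd_right _ _)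
  rw [Nat.div_mul_cancel he] at hg2
  exact Nat.isUnit_iff.1 (hd _ hg2)

lemma totient_eq_prod (e : ℕ) (he : Squarefree e) :
    (Nat.totient e : ℚ) = ∏ p ∈ e.primeFactors, ((p : ℚ) - 1) := by
  have he0 : e ≠ 0 := he.ne_zero
  have hnat : Nat.totient e = ∏ p ∈ e.primeFactors, (p - 1) := by
    rw [Nat.totient_eq_prod_factorization he0, Finsupp.prod]
    apply Finset.prod_congr rfl
    intro p hp
    have h1 : e.factorization p ≤ 1 :=
      (Nat.squarefree_iff_factorization_le_one he0).1 he p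
    have h2 : e.factorization p ≠ 0 := Finsupp.mem_support_iff.1 hp
    have hk : e.factorization p = 1 := by omega
    rw [hk]
    simp
  rw [hnat]
  push_cast
  apply Finset.prod_congr rfl
  intro p hp
  have := (Nat.prime_of_mem_primeFactors hp).two_le
  push_cast [Nat.cast_sub (by omega : 1 ≤ p)]
  ring

lemma scalar_eq (d e : ℕ) (hds : Squarefree d) (hedvd : e ∣ d) :
    (Nat.totient d : ℚ) * ∏ p ∈ e.primeFactors, (((p : ℚ) - 2) / ((p : ℚ) - 1))
      = (Nat.totient (d / e) : ℚ) * ∏ p ∈ e.primeFactors, ((p : ℚ) - 2) := by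
  have hes : Squarefree e := hds.squarefree_of_dvd hedvd
  have h2 : (Nat.totient d : ℚ) = (Nat.totient (d / e) : ℚ) * (Nat.totient e : ℚ) := by
    conv_lhs => rw [show d = (d / e) * e from (Nat.div_mul_cancel hedvd).symm]
    rw [Nat.totient_mul (cop_div d e hds hedvd)]
    push_cast
    ring
  rw [h2, totient_eq_prod e hes, mul_assoc, ← Finset.prod_mul_distrib]
  congr 1
  apply Finset.prod_congr rfl
  intro p hp
  have h2le : (2 : ℚ) ≤ (p : ℚ) := by
    exact_mod_cast (Nat.prime_of_mem_primeFactors hp).two_le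
  have hne : (p : ℚ) - 1 ≠ 0 := by linarith
  field_simp

theorem stmt_6 (q r : ℕ) (hq : 0 < q) (hr : 0 < r)
    (hqs : Squarefree q) (hrs : Squarefree r) :
    F q * F r
      = (Nat.totient (Nat.gcd q r) : ℚ) •
          ∑ e ∈ (Nat.gcd q r).divisors,
            (∏ p ∈ e.primeFactors, ((p : ℚ) - 2) / ((p : ℚ) - 1)) •
              F (q * r * e / (Nat.gcd q r) ^ 2) := by
  set d := Nat.gcd q r with hddef
  have hdq : d ∣ q := Nat.gcd_dvd_left q r
  have hdr : d ∣ r := Nat.gcd_dvd_right q r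
  have hd0 : 0 < d := Nat.gcd_pos_of_pos_left r hq
  have hds : Squarefree d := hqs.squarefree_of_dvd hdq
  obtain ⟨q', hq'⟩ := hdq
  obtain ⟨r', hr'⟩ := hdr
  have hq'0 : 0 < q' := by
    rcases Nat.eq_zero_or_pos q' with h | h
    · subst h; rw [mul_zero] at hq'; omega
    · exact h
  have hr'0 : 0 < r' := by
    rcases Nat.eq_zero_or_pos r' with h | h
    · subst h; rw [mul_zero] at hr'; omega
    · exact h
  have hcq : Nat.Coprime d q' := cop_of_sq d q' (hq' ▸ hqs)
  have hcr : Nat.Coprime d r' := cop_of_sq d r' (hr' ▸ hrs)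
  have hq'div : q / d = q' := by rw [hq']; exact Nat.mul_div_cancel_left q' hd0
  have hr'div : r / d = r' := by rw [hr']; exact Nat.mul_div_cancel_left r' hd0
  have hq'r' : Nat.Coprime q' r' := by
    have := Nat.coprime_div_gcd_div_gcd (hddef ▸ hd0)
    rwa [← hddef, hq'div, hr'div] at this
  have hidx : ∀ e : ℕ, q * r * e / d ^ 2 = q' * r' * e := by
    intro e
    rw [hq', hr', show d * q' * (d * r') * e = d ^ 2 * (q' * r' * e) by ring]
    exact Nat.mul_div_cancel_left _ (pow_pos hd0 2)
  have key : F q * F r = ∑ e ∈ d.divisors,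
      ((Nat.totient (d / e) : ℚ) * ∏ p ∈ e.primeFactors, ((p : ℚ) - 2))
        • F (q' * r' * e) := by
    have e1 : F q * F r = F (q' * r') * (F d * F d) := by
      rw [hq', hr', ← F_mul d q' hd0 hq'0 hcq, ← F_mul d r' hd0 hr'0 hcr,
        ← F_mul q' r' hq'0 hr'0 hq'r']
      ring
    rw [e1, F_sq_of_squarefree d hds, Finset.mul_sum]
    apply Finset.sum_congr rfl
    intro e he
    obtain ⟨hedvd, -⟩ := Nat.mem_divisors.1 he
    have he0 : 0 < e := Nat.pos_of_dvd_of_pos hedvd hd0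
    have hce : Nat.Coprime (q' * r') e :=
      Nat.Coprime.mul (Nat.Coprime.coprime_dvd_right hedvd hcq.symm)
        (Nat.Coprime.coprime_dvd_right hedvd hcr.symm)
    rw [mul_smul_comm, F_mul (q' * r') e (Nat.mul_pos hq'0 hr'0) he0 hce]
  rw [key, Finset.smul_sum]
  apply Finset.sum_congr rfl
  intro e he
  obtain ⟨hedvd, -⟩ := Nat.mem_divisors.1 he
  rw [smul_smul, hidx e]
  congr 1
  exact (scalar_eq d e hds hedvd).symm
end
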